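/- In the Linear DistFlow model for a radial network with nonnegative line resistances and reactances, the linear voltage estimate upper-bounds the true squared voltage magnitude: for every node i, v_i ≤ v̂_i(s), where v̂_i(s) = v_0 + 2·Σ_{(j,k)∈P_i} Re(z̄_{jk} Ŝ_{jk}(s)) and the true voltages satisfy the DistFlow equations with nonnegative squared currents l_{jk} ≥ 0. -/

import Mathlib

open Finset

/-- Linear DistFlow over-estimates the squared voltage magnitudes.
A radial network rooted at node `0` is encoded by a parent map; each branch is
labelled by its child node `i ≠ 0`. `P i` is the (unique) path from node `i` to the
root, given as the set of branches on it. If the true quantities `(S, v, l)` satisfy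
the DistFlow equations with `l ≥ 0` and nonnegative resistances/reactances
`Re(z) ≥ 0`, `Im(z) ≥ 0`, and the Linear DistFlow estimates are
`Ŝ_e(s) = Σ_{h : e ∈ P_h} s_h`, `v̂_i(s) = v₀ + 2 Σ_{e ∈ P_i} Re(z̄_e Ŝ_e(s))`,
then `v_i ≤ v̂_i(s)` at every node `i`. -/
theorem stmt_1 (n : ℕ) (parent : Fin (n + 1) → Fin (n + 1))
    (P : Fin (n + 1) → Finset (Fin (n + 1)))
    (s S Shat z : Fin (n + 1) → ℂ) (v vhat l : Fin (n + 1) → ℝ) (v0 : ℝ)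
    -- path structure of the radial network
    (hP0 : P 0 = ∅)
    (hPstep : ∀ i : Fin (n + 1), i ≠ 0 → P i = insert i (P (parent i)))
    (hPnew : ∀ i : Fin (n + 1), i ≠ 0 → i ∉ P (parent i))
    (hPbranch : ∀ i e : Fin (n + 1), e ∈ P i → e ≠ 0)
    -- DistFlow equations for the true quantities
    (hflow : ∀ i : Fin (n + 1), i ≠ 0 →
      S i = s i + ∑ h ∈ Finset.univ.filter (fun h => parent h = i ∧ h ≠ 0),
        (S h - z h * (l h : ℂ)))
    (hvolt : ∀ i : Fin (n + 1), i ≠ 0 →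
      v i - v (parent i) =
        2 * ((starRingEnd ℂ) (z i) * S i).re - ‖z i‖ ^ 2 * l i)
    (hv0 : v 0 = v0)
    -- nonnegative squared currents, resistances and reactances
    (hl : ∀ i, 0 ≤ l i) (hr : ∀ i, 0 ≤ (z i).re) (hx : ∀ i, 0 ≤ (z i).im)
    -- Linear DistFlow estimates
    (hShat : ∀ e : Fin (n + 1), e ≠ 0 →
      Shat e = ∑ h ∈ Finset.univ.filter (fun h => e ∈ P h), s h)
    (hvhat : ∀ i, vhat i = v0 + 2 * ∑ e ∈ P i, ((starRingEnd ℂ) (z e) * Shat e).re) :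
    ∀ i, v i ≤ vhat i := by
  -- basic facts
  have hcb : ∀ t : Finset (Fin (n + 1)), t.card ≤ n + 1 := fun t =>
    le_trans (Finset.card_le_univ t) (by simp)
  have hcardP : ∀ i : Fin (n + 1), i ≠ 0 → (P i).card = (P (parent i)).card + 1 := by
    intro i hi
    rw [hPstep i hi, Finset.card_insert_of_notMem (hPnew i hi)]
  have hself : ∀ i : Fin (n + 1), i ≠ 0 → i ∈ P i := by
    intro i hi
    rw [hPstep i hi]; exact Finset.mem_insert_self _ _
  have hne0 : ∀ h c : Fin (n + 1), c ∈ P h → h ≠ 0 := by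
    intro h c hc e
    rw [e, hP0] at hc
    exact absurd hc (Finset.notMem_empty _)
  -- path transitivity
  have hsub : ∀ m : ℕ, ∀ h c : Fin (n + 1), (P h).card ≤ m → c ∈ P h → P c ⊆ P h := by
    intro m
    induction m with
    | zero =>
      intro h c hm hc
      rw [Finset.card_eq_zero.mp (Nat.le_zero.mp hm)] at hc
      exact absurd hc (Finset.notMem_empty _)
    | succ m ih =>
      intro h c hm hc
      have hh : h ≠ 0 := hne0 h c hc
      rw [hPstep h hh] at hc
      rcases Finset.mem_insert.mp hc with rfl | hc'
      · exact subset_rfl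
      · have h1 : (P (parent h)).card ≤ m := by have := hcardP h hh; omega
        refine (ih (parent h) c h1 hc').trans ?_
        rw [hPstep h hh]
        exact Finset.subset_insert _ _
  -- every strict ancestor on a path has a child on the path
  have hexC : ∀ m : ℕ, ∀ h i : Fin (n + 1), (P h).card ≤ m → i ∈ P h → i ≠ h →
      ∃ c, parent c = i ∧ c ≠ 0 ∧ c ∈ P h := by
    intro m
    induction m with
    | zero =>
      intro h i hm hi
      rw [Finset.card_eq_zero.mp (Nat.le_zero.mp hm)] at hi
      exact absurd hi (Finset.notMem_empty _)
    | succ m ih =>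
      intro h i hm hi hne
      have hh : h ≠ 0 := hne0 h i hi
      rw [hPstep h hh] at hi
      rcases Finset.mem_insert.mp hi with rfl | hi'
      · exact absurd rfl hne
      · by_cases hp : parent h = i
        · exact ⟨h, hp, hh, hself h hh⟩
        · have h1 : (P (parent h)).card ≤ m := by have := hcardP h hh; omega
          obtain ⟨c, hc1, hc2, hc3⟩ := ih (parent h) i h1 hi' (fun e => hp e.symm)
          refine ⟨c, hc1, hc2, ?_⟩
          rw [hPstep h hh]
          exact Finset.mem_insert_of_mem hc3
  -- at most one child of a node on a path
  have huniq : ∀ m : ℕ, ∀ h c c' : Fin (n + 1), (P h).card ≤ m → c ∈ P h → c' ∈ P h →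
      parent c = parent c' → c = c' := by
    intro m
    induction m with
    | zero =>
      intro h c c' hm hc
      rw [Finset.card_eq_zero.mp (Nat.le_zero.mp hm)] at hc
      exact absurd hc (Finset.notMem_empty _)
    | succ m ih =>
      intro h c c' hm hc hc' hpp
      have hh : h ≠ 0 := hne0 h c hc
      have h1 : (P (parent h)).card ≤ m := by have := hcardP h hh; omega
      rw [hPstep h hh] at hc hc'
      rcases Finset.mem_insert.mp hc with rfl | hcm
      · rcases Finset.mem_insert.mp hc' with rfl | hcm'
        · rfl
        · exfalso
          have hc'0 : c' ≠ 0 := hPbranch (parent c) c' hcm'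
          exact hPnew c' hc'0 (by rw [← hpp]; exact hcm')
      · rcases Finset.mem_insert.mp hc' with rfl | hcm'
        · exfalso
          have hc0 : c ≠ 0 := hPbranch (parent c') c hcm
          exact hPnew c hc0 (by rw [hpp]; exact hcm)
        · exact ih (parent h) c c' h1 hcm hcm' hpp
  -- the filter of nodes through e, decomposed
  have hBins : ∀ i : Fin (n + 1), i ≠ 0 →
      (Finset.univ.filter fun h => i ∈ P h) =
        insert i (Finset.univ.filter fun h => i ∈ P h ∧ h ≠ i) := by
    intro i hi
    ext h
    simp only [Finset.mem_filter, Finset.mem_insert, Finset.mem_univ, true_and]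
    constructor
    · intro hh
      by_cases e : h = i
      · exact Or.inl e
      · exact Or.inr ⟨hh, e⟩
    · rintro (rfl | ⟨hh, _⟩)
      · exact hself _ hi
      · exact hh
  have hiA : ∀ i : Fin (n + 1), i ∉ (Finset.univ.filter fun h => i ∈ P h ∧ h ≠ i) := by
    intro i hi
    simp only [Finset.mem_filter] at hi
    exact hi.2.2 rfl
  -- decomposition of strict-descendant set as union over children
  have hbiU : ∀ i : Fin (n + 1), i ≠ 0 →
      (Finset.univ.filter fun h => i ∈ P h ∧ h ≠ i) =
        (Finset.univ.filter fun h => parent h = i ∧ h ≠ 0).biUnion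
          (fun c => Finset.univ.filter fun h => c ∈ P h) := by
    intro i hi
    ext h
    simp only [Finset.mem_biUnion, Finset.mem_filter, Finset.mem_univ, true_and]
    constructor
    · rintro ⟨hiPh, hne⟩
      obtain ⟨c, hc1, hc2, hc3⟩ := hexC (n + 1) h i (hcb _) hiPh (fun e => hne e.symm)
      exact ⟨c, ⟨hc1, hc2⟩, hc3⟩
    · rintro ⟨c, ⟨hc1, hc2⟩, hc3⟩
      have hiPc : i ∈ P c := by
        rw [hPstep c hc2, hc1]
        exact Finset.mem_insert_of_mem (hself i hi)
      refine ⟨hsub (n + 1) h c (hcb _) hc3 hiPc, ?_⟩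
      rintro rfl
      exact hPnew c hc2 (hc1 ▸ hc3)
  have hdisj : ∀ i : Fin (n + 1),
      (↑(Finset.univ.filter fun h => parent h = i ∧ h ≠ 0) : Set (Fin (n + 1))).PairwiseDisjoint
        (fun c => Finset.univ.filter fun h : Fin (n + 1) => c ∈ P h) := by
    intro i c hc c' hc' hne
    simp only [Finset.coe_filter, Set.mem_setOf_eq, Finset.mem_univ, true_and] at hc hc'
    refine Finset.disjoint_left.mpr ?_
    intro h hh hh'
    simp only [Finset.mem_filter, Finset.mem_univ, true_and] at hh hh'
    exact hne (huniq (n + 1) h c c' (hcb _) hh hh' (by rw [hc.1, hc'.1]))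
  -- main algebraic step
  have hmain : ∀ i : Fin (n + 1), i ≠ 0 →
      (∀ c ∈ Finset.univ.filter fun h => parent h = i ∧ h ≠ 0,
        S c - z c * (l c : ℂ) =
          ∑ h ∈ Finset.univ.filter (fun h => c ∈ P h), (s h - z h * (l h : ℂ))) →
      Shat i - S i = ∑ h ∈ Finset.univ.filter (fun h => i ∈ P h ∧ h ≠ i), z h * (l h : ℂ) := by
    intro i hi hch
    have h1 : Shat i = s i + ∑ h ∈ Finset.univ.filter (fun h => i ∈ P h ∧ h ≠ i), s h := by
      rw [hShat i hi, hBins i hi, Finset.sum_insert (hiA i)]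
    have h2 : S i = s i + ∑ h ∈ Finset.univ.filter (fun h => i ∈ P h ∧ h ≠ i),
        (s h - z h * (l h : ℂ)) := by
      rw [hflow i hi]
      congr 1
      rw [hbiU i hi, Finset.sum_biUnion (hdisj i)]
      exact Finset.sum_congr rfl fun c hc => hch c hc
    rw [h1, h2, Finset.sum_sub_distrib]
    ring
  -- key flow identity, by induction on depth from the leaves
  have key : ∀ m : ℕ, ∀ i : Fin (n + 1), i ≠ 0 → n + 1 - (P i).card ≤ m →
      Shat i - S i = ∑ h ∈ Finset.univ.filter (fun h => i ∈ P h ∧ h ≠ i), z h * (l h : ℂ) := by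
    intro m
    induction m with
    | zero =>
      intro i hi hm
      apply hmain i hi
      intro c hc
      exfalso
      simp only [Finset.mem_filter, Finset.mem_univ, true_and] at hc
      have h1 : (P c).card = (P i).card + 1 := by rw [hcardP c hc.2, hc.1]
      have h2 := hcb (P c)
      omega
    | succ m ih =>
      intro i hi hm
      apply hmain i hi
      intro c hc
      simp only [Finset.mem_filter, Finset.mem_univ, true_and] at hc
      have h1 : (P c).card = (P i).card + 1 := by rw [hcardP c hc.2, hc.1]
      have h2 := hcb (P c)
      have hrec := ih c hc.2 (by omega)
      rw [Finset.sum_sub_distrib, ← hShat c hc.2, hBins c hc.2,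
        Finset.sum_insert (hiA c), ← hrec]
      ring
  -- pointwise real-part bound
  have keyre : ∀ e : Fin (n + 1), e ≠ 0 →
      ((starRingEnd ℂ) (z e) * S e).re ≤ ((starRingEnd ℂ) (z e) * Shat e).re := by
    intro e he
    have hd := key (n + 1) e he (Nat.sub_le _ _)
    set w : ℂ := ∑ h ∈ Finset.univ.filter (fun h => e ∈ P h ∧ h ≠ e), z h * (l h : ℂ) with hw
    have hwre : 0 ≤ w.re := by
      rw [hw, Complex.re_sum]
      refine Finset.sum_nonneg fun h _ => ?_
      simp only [Complex.mul_re, Complex.ofReal_re, Complex.ofReal_im, mul_zero, sub_zero]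
      exact mul_nonneg (hr h) (hl h)
    have hwim : 0 ≤ w.im := by
      rw [hw, Complex.im_sum]
      refine Finset.sum_nonneg fun h _ => ?_
      simp only [Complex.mul_im, Complex.ofReal_re, Complex.ofReal_im, mul_zero, zero_add]
      exact mul_nonneg (hx h) (hl h)
    have hS : Shat e = S e + w := by rw [hw]; linear_combination hd
    rw [hS, mul_add, Complex.add_re]
    have : 0 ≤ ((starRingEnd ℂ) (z e) * w).re := by
      simp only [Complex.mul_re, Complex.conj_re, Complex.conj_im]
      nlinarith [hr e, hx e]
    linarith
  -- exact voltage expansion along the path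
  have hV : ∀ m : ℕ, ∀ i : Fin (n + 1), (P i).card ≤ m →
      v i = v0 + ∑ e ∈ P i,
        (2 * ((starRingEnd ℂ) (z e) * S e).re - ‖z e‖ ^ 2 * l e) := by
    intro m
    induction m with
    | zero =>
      intro i hm
      have hPe : P i = ∅ := Finset.card_eq_zero.mp (Nat.le_zero.mp hm)
      have hi0 : i = 0 := by
        by_contra hi
        exact absurd (hself i hi) (by rw [hPe]; exact Finset.notMem_empty _)
      rw [hi0, hP0, hv0]
      simp
    | succ m ih =>
      intro i hm
      by_cases hi : i = 0
      · rw [hi, hP0, hv0]; simp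
      · have h1 := hvolt i hi
        have h2 := ih (parent i) (by have := hcardP i hi; omega)
        rw [hPstep i hi, Finset.sum_insert (hPnew i hi)]
        linarith
  -- conclusion
  intro i
  rw [hvhat i, hV (n + 1) i (hcb _), Finset.mul_sum]
  refine add_le_add_right (Finset.sum_le_sum fun e he => ?_) v0
  have he0 : e ≠ 0 := hPbranch i e he
  have hz : 0 ≤ ‖z e‖ ^ 2 * l e := mul_nonneg (by positivity) (hl e)
  have := keyre e he0
  linarith
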